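/- Commutators of the fields 𝐗_i with generalized translations (Lemma 3.7): fix i ∈ {1,2,3} and define 𝐗_i = 𝐞_i + (vⁱ/v⁰)·𝐞_0. Then for every μ ∈ {0,1,2,3} and every smooth f(t,x,v): [𝐗_i, 𝐞_μ] f = (∂_{x^μ}φ)·(vⁱ/(v⁰)³)·𝐞_0 f; in particular [𝐗_i, 𝐞_μ] f equals ∂_{x^μ}φ times vⁱ/(v⁰)³ times 𝐞_0 f, since 𝐞_μ(vⁱ/v⁰) = −(∂_{x^μ}φ)·vⁱ/(v⁰)³. -/

import Mathlib

noncomputable section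

/-- Phase space point `(t, x, v)`. -/
abbrev Pt : Type := ℝ × (Fin 3 → ℝ) × (Fin 3 → ℝ)

/-- `v⁰ = √(1+|v|²)`. -/
def vzero (v : Fin 3 → ℝ) : ℝ := Real.sqrt (1 + ∑ i, (v i) ^ 2)

/-- Vertical derivative `V_i f = ∂_{vⁱ} f`. -/
def Vop (i : Fin 3) (f : Pt → ℝ) (p : Pt) : ℝ :=
  fderiv ℝ f p ((0 : ℝ), (0 : Fin 3 → ℝ), Pi.single i 1)

/-- `W f = vⁱ ∂_{vⁱ} f`. -/
def Wop (f : Pt → ℝ) (p : Pt) : ℝ := ∑ i, p.2.2 i * Vop i f p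

/-- Derivative of a function of `(t,x)` in the constant spacetime direction `d`. -/
def Dphi (φ : ℝ × (Fin 3 → ℝ) → ℝ) (d : ℝ × (Fin 3 → ℝ)) (q : ℝ × (Fin 3 → ℝ)) : ℝ :=
  fderiv ℝ φ q d

/-- `𝐓(φ) = v⁰ ∂_t φ + vⁱ ∂_{xⁱ} φ`, evaluated at a phase-space point. -/
def TphiFn (φ : ℝ × (Fin 3 → ℝ) → ℝ) (p : Pt) : ℝ :=
  vzero p.2.2 * Dphi φ ((1 : ℝ), (0 : Fin 3 → ℝ)) (p.1, p.2.1) +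
    ∑ i, p.2.2 i * Dphi φ ((0 : ℝ), Pi.single i 1) (p.1, p.2.1)

/-- Free transport operator `𝐓 f = v⁰ ∂_t f + vⁱ ∂_{xⁱ} f`. -/
def Tfree (f : Pt → ℝ) (p : Pt) : ℝ :=
  vzero p.2.2 * fderiv ℝ f p ((1 : ℝ), (0 : Fin 3 → ℝ), (0 : Fin 3 → ℝ)) +
    ∑ i, p.2.2 i * fderiv ℝ f p ((0 : ℝ), Pi.single i 1, (0 : Fin 3 → ℝ))

/-- Perturbed transport operator `𝐓_φ f = 𝐓 f − (𝐓(φ) vⁱ + ∂_{xⁱ}φ) ∂_{vⁱ} f`. -/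
def Tpert (φ : ℝ × (Fin 3 → ℝ) → ℝ) (f : Pt → ℝ) (p : Pt) : ℝ :=
  Tfree f p -
    ∑ i, (TphiFn φ p * p.2.2 i + Dphi φ ((0 : ℝ), Pi.single i 1) (p.1, p.2.1)) * Vop i f p

/-- Generalized translation `𝐞_d f = ∂_d f − (∂_d φ) · vⁱ ∂_{vⁱ} f` (spacetime direction `d`). -/
def eop (φ : ℝ × (Fin 3 → ℝ) → ℝ) (d : ℝ × (Fin 3 → ℝ)) (f : Pt → ℝ) (p : Pt) : ℝ :=
  fderiv ℝ f p (d.1, d.2, (0 : Fin 3 → ℝ)) - Dphi φ d (p.1, p.2.1) * Wop f p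

/-- The coordinate direction `∂_{x^μ}`, `μ ∈ {0,1,2,3}`, with `x⁰ = t`. -/
def dir4 (μ : Fin 4) : ℝ × (Fin 3 → ℝ) :=
  if _h : (μ : ℕ) = 0 then ((1 : ℝ), (0 : Fin 3 → ℝ))
  else ((0 : ℝ), Pi.single (⟨(μ : ℕ) - 1, by have := μ.isLt; omega⟩ : Fin 3) 1)

/-- `𝐗_i = 𝐞_i + (vⁱ/v⁰)·𝐞_0`. -/
def Xop (φ : ℝ × (Fin 3 → ℝ) → ℝ) (i : Fin 3) (f : Pt → ℝ) (p : Pt) : ℝ :=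
  eop φ ((0 : ℝ), Pi.single i 1) f p
    + (p.2.2 i / vzero p.2.2) * eop φ ((1 : ℝ), (0 : Fin 3 → ℝ)) f p

namespace L37

abbrev liftTX (d : ℝ × (Fin 3 → ℝ)) : Pt := (d.1, d.2, (0 : Fin 3 → ℝ))
abbrev vdir (j : Fin 3) : Pt := ((0:ℝ), (0 : Fin 3 → ℝ), Pi.single j 1)

def piTX : Pt →L[ℝ] ℝ × (Fin 3 → ℝ) :=
  (ContinuousLinearMap.fst ℝ ℝ ((Fin 3 → ℝ) × (Fin 3 → ℝ))).prod
    ((ContinuousLinearMap.fst ℝ (Fin 3 → ℝ) (Fin 3 → ℝ)).comp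
      (ContinuousLinearMap.snd ℝ ℝ ((Fin 3 → ℝ) × (Fin 3 → ℝ))))

@[simp] lemma piTX_apply (q : Pt) : piTX q = (q.1, q.2.1) := rfl

def nu (j : Fin 3) : Pt →L[ℝ] ℝ :=
  (ContinuousLinearMap.proj j).comp
    ((ContinuousLinearMap.snd ℝ (Fin 3 → ℝ) (Fin 3 → ℝ)).comp
      (ContinuousLinearMap.snd ℝ ℝ ((Fin 3 → ℝ) × (Fin 3 → ℝ))))

@[simp] lemma nu_apply (j : Fin 3) (q : Pt) : nu j q = q.2.2 j := rfl

variable {φ : ℝ × (Fin 3 → ℝ) → ℝ} {f : Pt → ℝ}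

/-- second derivative symmetry for f -/
lemma fsymm (hf : ContDiff ℝ (⊤:ℕ∞) f) (p u w : Pt) :
    fderiv ℝ (fderiv ℝ f) p u w = fderiv ℝ (fderiv ℝ f) p w u :=
  second_derivative_symmetric
    (fun y => ((hf.differentiable (by simp)) y).hasFDerivAt)
    ((((hf.fderiv_right (m := (⊤:ℕ∞)) (by simp)).differentiable (by simp)) p).hasFDerivAt) u w

lemma phisymm (hφ : ContDiff ℝ (⊤:ℕ∞) φ) (q u w : ℝ × (Fin 3 → ℝ)) :
    fderiv ℝ (fderiv ℝ φ) q u w = fderiv ℝ (fderiv ℝ φ) q w u :=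
  second_derivative_symmetric
    (fun y => ((hφ.differentiable (by simp)) y).hasFDerivAt)
    ((((hφ.fderiv_right (m := (⊤:ℕ∞)) (by simp)).differentiable (by simp)) q).hasFDerivAt) u w

lemma hasFDerivAt_fderiv_apply (hf : ContDiff ℝ (⊤:ℕ∞) f) (w : Pt) (p : Pt) :
    HasFDerivAt (fun q => fderiv ℝ f q w) ((fderiv ℝ (fderiv ℝ f) p).flip w) p := by
  have h := ((((hf.fderiv_right (m := (⊤:ℕ∞)) (by simp)).differentiable (by simp)) p).hasFDerivAt).clm_apply
      (hasFDerivAt_const w p)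
  simpa using h

lemma hasFDerivAt_Dphi (hφ : ContDiff ℝ (⊤:ℕ∞) φ) (d : ℝ × (Fin 3 → ℝ)) (p : Pt) :
    HasFDerivAt (fun q : Pt => Dphi φ d (q.1, q.2.1))
      (((fderiv ℝ (fderiv ℝ φ) (p.1, p.2.1)).flip d).comp piTX) p := by
  have h1 : HasFDerivAt (fun r => fderiv ℝ φ r d)
      ((fderiv ℝ (fderiv ℝ φ) (p.1, p.2.1)).flip d) ((p.1, p.2.1) : ℝ × (Fin 3 → ℝ)) := by
    have h := ((((hφ.fderiv_right (m := (⊤:ℕ∞)) (by simp)).differentiable (by simp))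
      ((p.1, p.2.1) : ℝ × (Fin 3 → ℝ))).hasFDerivAt).clm_apply
        (hasFDerivAt_const d ((p.1, p.2.1) : ℝ × (Fin 3 → ℝ)))
    simpa using h
  exact h1.comp p (piTX.hasFDerivAt)

lemma hasFDerivAt_Wop (hf : ContDiff ℝ (⊤:ℕ∞) f) (p : Pt) :
    HasFDerivAt (fun q => Wop f q)
      (∑ j, (p.2.2 j • ((fderiv ℝ (fderiv ℝ f) p).flip (vdir j))
              + (fderiv ℝ f p (vdir j)) • nu j)) p := by
  refine HasFDerivAt.fun_sum fun j _ => ?_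
  exact ((nu j).hasFDerivAt (x := p)).mul (hasFDerivAt_fderiv_apply hf (vdir j) p)

lemma hasFDerivAt_eop (hφ : ContDiff ℝ (⊤:ℕ∞) φ) (hf : ContDiff ℝ (⊤:ℕ∞) f)
    (d : ℝ × (Fin 3 → ℝ)) (p : Pt) :
    HasFDerivAt (eop φ d f)
      ((fderiv ℝ (fderiv ℝ f) p).flip (liftTX d)
        - (Dphi φ d (p.1, p.2.1) • (∑ j, (p.2.2 j • ((fderiv ℝ (fderiv ℝ f) p).flip (vdir j))
              + (fderiv ℝ f p (vdir j)) • nu j))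
           + Wop f p • (((fderiv ℝ (fderiv ℝ φ) (p.1, p.2.1)).flip d).comp piTX))) p := by
  exact (hasFDerivAt_fderiv_apply hf (liftTX d) p).sub
    ((hasFDerivAt_Dphi hφ d p).mul (hasFDerivAt_Wop hf p))

lemma fderiv_eop_apply (hφ : ContDiff ℝ (⊤:ℕ∞) φ) (hf : ContDiff ℝ (⊤:ℕ∞) f)
    (d : ℝ × (Fin 3 → ℝ)) (p u : Pt) :
    fderiv ℝ (eop φ d f) p u
      = fderiv ℝ (fderiv ℝ f) p u (liftTX d)
        - (Dphi φ d (p.1, p.2.1)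
            * (∑ j, (p.2.2 j * fderiv ℝ (fderiv ℝ f) p u (vdir j)
                + fderiv ℝ f p (vdir j) * u.2.2 j))
           + Wop f p * fderiv ℝ (fderiv ℝ φ) (p.1, p.2.1) (u.1, u.2.1) d) := by
  rw [(hasFDerivAt_eop hφ hf d p).fderiv]
  simp [ContinuousLinearMap.sum_apply, Finset.mul_sum]

end L37

namespace L37
variable {φ : ℝ × (Fin 3 → ℝ) → ℝ} {f : Pt → ℝ}

lemma fderiv_eop_lift (hφ : ContDiff ℝ (⊤:ℕ∞) φ) (hf : ContDiff ℝ (⊤:ℕ∞) f)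
    (a b : ℝ × (Fin 3 → ℝ)) (p : Pt) :
    fderiv ℝ (eop φ b f) p (liftTX a)
      = fderiv ℝ (fderiv ℝ f) p (liftTX a) (liftTX b)
        - Dphi φ b (p.1, p.2.1) * (∑ j, p.2.2 j * fderiv ℝ (fderiv ℝ f) p (vdir j) (liftTX a))
        - Wop f p * fderiv ℝ (fderiv ℝ φ) (p.1, p.2.1) a b := by
  rw [fderiv_eop_apply hφ hf b p (liftTX a)]
  have : ∀ j : Fin 3,
      p.2.2 j * fderiv ℝ (fderiv ℝ f) p (liftTX a) (vdir j)
        + fderiv ℝ f p (vdir j) * (liftTX a).2.2 j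
      = p.2.2 j * fderiv ℝ (fderiv ℝ f) p (vdir j) (liftTX a) := fun j => by
    rw [fsymm hf]; simp
  rw [Finset.sum_congr rfl fun j _ => this j]
  ring

lemma fderiv_eop_vdir (hφ : ContDiff ℝ (⊤:ℕ∞) φ) (hf : ContDiff ℝ (⊤:ℕ∞) f)
    (b : ℝ × (Fin 3 → ℝ)) (p : Pt) (j : Fin 3) :
    fderiv ℝ (eop φ b f) p (vdir j)
      = fderiv ℝ (fderiv ℝ f) p (vdir j) (liftTX b)
        - Dphi φ b (p.1, p.2.1) * (∑ k, p.2.2 k * fderiv ℝ (fderiv ℝ f) p (vdir j) (vdir k))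
        - Dphi φ b (p.1, p.2.1) * fderiv ℝ f p (vdir j) := by
  rw [fderiv_eop_apply hφ hf b p (vdir j)]
  have h0 : fderiv ℝ (fderiv ℝ φ) (p.1, p.2.1) (((vdir j).1, (vdir j).2.1) : ℝ × (Fin 3 → ℝ)) b
      = 0 := by
    have : (((vdir j).1, (vdir j).2.1) : ℝ × (Fin 3 → ℝ)) = 0 := by
      simp [Prod.ext_iff]
    rw [this]; simp
  rw [h0]
  have h1 : ∑ k : Fin 3, (p.2.2 k * fderiv ℝ (fderiv ℝ f) p (vdir j) (vdir k)
        + fderiv ℝ f p (vdir k) * (vdir j).2.2 k)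
      = (∑ k, p.2.2 k * fderiv ℝ (fderiv ℝ f) p (vdir j) (vdir k)) + fderiv ℝ f p (vdir j) := by
    rw [Finset.sum_add_distrib]
    congr 1
    simp [Pi.single_apply]
  rw [h1]; ring

lemma eop_eop (hφ : ContDiff ℝ (⊤:ℕ∞) φ) (hf : ContDiff ℝ (⊤:ℕ∞) f)
    (a b : ℝ × (Fin 3 → ℝ)) (p : Pt) :
    eop φ a (eop φ b f) p
      = fderiv ℝ (fderiv ℝ f) p (liftTX a) (liftTX b)
        - Dphi φ b (p.1, p.2.1) * (∑ j, p.2.2 j * fderiv ℝ (fderiv ℝ f) p (vdir j) (liftTX a))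
        - Wop f p * fderiv ℝ (fderiv ℝ φ) (p.1, p.2.1) a b
        - Dphi φ a (p.1, p.2.1) * (∑ j, p.2.2 j * fderiv ℝ (fderiv ℝ f) p (vdir j) (liftTX b))
        + Dphi φ a (p.1, p.2.1) * Dphi φ b (p.1, p.2.1) *
            ((∑ j, p.2.2 j * ∑ k, p.2.2 k * fderiv ℝ (fderiv ℝ f) p (vdir j) (vdir k))
             + ∑ j, p.2.2 j * fderiv ℝ f p (vdir j)) := by
  have hrfl : eop φ a (eop φ b f) p
      = fderiv ℝ (eop φ b f) p (liftTX a)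
        - Dphi φ a (p.1, p.2.1) * ∑ j, p.2.2 j * fderiv ℝ (eop φ b f) p (vdir j) := rfl
  have hsum : (∑ j, p.2.2 j * fderiv ℝ (eop φ b f) p (vdir j))
      = ∑ j : Fin 3, p.2.2 j *
        (fderiv ℝ (fderiv ℝ f) p (vdir j) (liftTX b)
          - Dphi φ b (p.1, p.2.1) * (∑ k, p.2.2 k * fderiv ℝ (fderiv ℝ f) p (vdir j) (vdir k))
          - Dphi φ b (p.1, p.2.1) * fderiv ℝ f p (vdir j)) :=
    Finset.sum_congr rfl fun j _ => by rw [fderiv_eop_vdir hφ hf b p j]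
  rw [hrfl, fderiv_eop_lift hφ hf a b p, hsum]
  have expand : ∑ j : Fin 3, p.2.2 j *
        (fderiv ℝ (fderiv ℝ f) p (vdir j) (liftTX b)
          - Dphi φ b (p.1, p.2.1) * (∑ k, p.2.2 k * fderiv ℝ (fderiv ℝ f) p (vdir j) (vdir k))
          - Dphi φ b (p.1, p.2.1) * fderiv ℝ f p (vdir j))
      = (∑ j, p.2.2 j * fderiv ℝ (fderiv ℝ f) p (vdir j) (liftTX b))
        - Dphi φ b (p.1, p.2.1) *
            (∑ j, p.2.2 j * ∑ k, p.2.2 k * fderiv ℝ (fderiv ℝ f) p (vdir j) (vdir k))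
        - Dphi φ b (p.1, p.2.1) * (∑ j, p.2.2 j * fderiv ℝ f p (vdir j)) := by
    rw [Finset.mul_sum, Finset.mul_sum, ← Finset.sum_sub_distrib, ← Finset.sum_sub_distrib]
    exact Finset.sum_congr rfl fun j _ => by ring
  rw [expand]
  ring

lemma eop_comm (hφ : ContDiff ℝ (⊤:ℕ∞) φ) (hf : ContDiff ℝ (⊤:ℕ∞) f)
    (a b : ℝ × (Fin 3 → ℝ)) (p : Pt) :
    eop φ a (eop φ b f) p = eop φ b (eop φ a f) p := by
  rw [eop_eop hφ hf a b p, eop_eop hφ hf b a p,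
    fsymm hf p (liftTX a) (liftTX b), phisymm hφ (p.1, p.2.1) a b]
  ring

end L37

namespace L37
variable {φ : ℝ × (Fin 3 → ℝ) → ℝ} {f : Pt → ℝ}

lemma vzero_pos (v : Fin 3 → ℝ) : 0 < vzero v :=
  Real.sqrt_pos.mpr (by positivity)

lemma vzero_sq (v : Fin 3 → ℝ) : vzero v ^ 2 = 1 + ∑ j, v j ^ 2 :=
  Real.sq_sqrt (by positivity)

lemma hasFDerivAt_g (i : Fin 3) (p : Pt) :
    HasFDerivAt (fun q : Pt => q.2.2 i / vzero q.2.2)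
      (p.2.2 i • (-((((vzero p.2.2 ^ 2)⁻¹ * ((vzero p.2.2)⁻¹ * 2⁻¹)) : ℝ) •
          (∑ j, ((2 * p.2.2 j) • nu j))))
        + (vzero p.2.2)⁻¹ • nu i) p := by
  have hs := vzero_pos p.2.2
  have hsum : HasFDerivAt (fun q : Pt => 1 + ∑ j, q.2.2 j ^ 2)
      (∑ j, ((2 * p.2.2 j) • nu j)) p := by
    refine (HasFDerivAt.fun_sum fun j _ => ?_).const_add 1
    have h := ((nu j).hasFDerivAt (x := p)).mul ((nu j).hasFDerivAt (x := p))
    have heq : (fun q : Pt => q.2.2 j ^ 2) = fun q : Pt => q.2.2 j * q.2.2 j := by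
      funext q; ring
    have h2 : ((2 * p.2.2 j) • nu j : Pt →L[ℝ] ℝ)
        = (nu j) p • nu j + (nu j) p • nu j :=
      ContinuousLinearMap.ext fun u => by simp [two_mul]; ring
    rw [heq, h2]; exact h
  have hsqrt : HasFDerivAt (fun q : Pt => vzero q.2.2)
      ((1 / (2 * vzero p.2.2)) • (∑ j, ((2 * p.2.2 j) • nu j))) p := by
    have h := hsum.sqrt (by positivity)
    simpa [vzero] using h
  have hinv : HasFDerivAt (fun q : Pt => (vzero q.2.2)⁻¹)
      (-((((vzero p.2.2 ^ 2)⁻¹ * ((vzero p.2.2)⁻¹ * 2⁻¹)) : ℝ) •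
          (∑ j, ((2 * p.2.2 j) • nu j)))) p := by
    have h := (hasDerivAt_inv hs.ne').comp_hasFDerivAt p hsqrt
    simpa [Function.comp_def, smul_smul] using h
  have h := ((nu i).hasFDerivAt (x := p)).mul hinv
  have heq : (fun q : Pt => q.2.2 i / vzero q.2.2)
      = fun q : Pt => q.2.2 i * (vzero q.2.2)⁻¹ := by
    funext q; rw [div_eq_mul_inv]
  rw [heq]
  exact h

lemma fderiv_g_apply (i : Fin 3) (p u : Pt) :
    fderiv ℝ (fun q : Pt => q.2.2 i / vzero q.2.2) p u
      = u.2.2 i / vzero p.2.2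
        - p.2.2 i / (vzero p.2.2) ^ 3 * ∑ j, p.2.2 j * u.2.2 j := by
  have hs := vzero_pos p.2.2
  rw [(hasFDerivAt_g i p).fderiv]
  simp only [ContinuousLinearMap.add_apply, ContinuousLinearMap.smul_apply,
    ContinuousLinearMap.neg_apply, ContinuousLinearMap.sum_apply, nu_apply, smul_eq_mul]
  have h1 : (∑ j, 2 * p.2.2 j * u.2.2 j : ℝ) = 2 * ∑ j, p.2.2 j * u.2.2 j := by
    rw [Finset.mul_sum]; exact Finset.sum_congr rfl fun j _ => by ring
  rw [h1]
  field_simp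
  ring

lemma eop_g (hφ : ContDiff ℝ (⊤:ℕ∞) φ) (d : ℝ × (Fin 3 → ℝ)) (i : Fin 3) (p : Pt) :
    eop φ d (fun q : Pt => q.2.2 i / vzero q.2.2) p
      = -(Dphi φ d (p.1, p.2.1)) * (p.2.2 i / (vzero p.2.2) ^ 3) := by
  have hs := vzero_pos p.2.2
  have hrfl : eop φ d (fun q : Pt => q.2.2 i / vzero q.2.2) p
      = fderiv ℝ (fun q : Pt => q.2.2 i / vzero q.2.2) p (liftTX d)
        - Dphi φ d (p.1, p.2.1) *
            ∑ j, p.2.2 j * fderiv ℝ (fun q : Pt => q.2.2 i / vzero q.2.2) p (vdir j) := rfl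
  have hsum : (∑ j, p.2.2 j * fderiv ℝ (fun q : Pt => q.2.2 i / vzero q.2.2) p (vdir j))
      = ∑ j : Fin 3, p.2.2 j * ((Pi.single j 1 : Fin 3 → ℝ) i / vzero p.2.2
          - p.2.2 i / (vzero p.2.2) ^ 3 * (p.2.2 j)) := by
    refine Finset.sum_congr rfl fun j _ => ?_
    rw [fderiv_g_apply i p (vdir j)]
    have : (∑ k, p.2.2 k * (vdir j).2.2 k : ℝ) = p.2.2 j := by
      simp [Pi.single_apply]
    rw [this]
  have h2 : ∑ j : Fin 3, p.2.2 j * ((Pi.single j 1 : Fin 3 → ℝ) i / vzero p.2.2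
          - p.2.2 i / (vzero p.2.2) ^ 3 * (p.2.2 j))
      = p.2.2 i / vzero p.2.2 - p.2.2 i / (vzero p.2.2) ^ 3 * ∑ j, p.2.2 j ^ 2 := by
    have step : ∀ j : Fin 3, p.2.2 j * ((Pi.single j 1 : Fin 3 → ℝ) i / vzero p.2.2
          - p.2.2 i / (vzero p.2.2) ^ 3 * (p.2.2 j))
        = (if i = j then p.2.2 j / vzero p.2.2 else 0)
            - p.2.2 i / (vzero p.2.2) ^ 3 * p.2.2 j ^ 2 := by
      intro j
      rw [Pi.single_apply]
      split <;> ring_nf <;> simp [*]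
    rw [Finset.sum_congr rfl fun j _ => step j, Finset.sum_sub_distrib,
      Finset.sum_ite_eq Finset.univ i, ← Finset.mul_sum]
    simp
  rw [hrfl, fderiv_g_apply i p (liftTX d), hsum, h2]
  have h3 : (∑ j, p.2.2 j ^ 2 : ℝ) = vzero p.2.2 ^ 2 - 1 := by
    rw [vzero_sq]; ring
  rw [h3]
  have h4 : ((liftTX d).2.2 : Fin 3 → ℝ) i = 0 := rfl
  rw [h4]
  field_simp
  simp only [Pi.zero_apply, mul_zero, Finset.sum_const_zero]
  ring

end L37

namespace L37
variable {φ : ℝ × (Fin 3 → ℝ) → ℝ} {f : Pt → ℝ}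

lemma eop_Xop (hφ : ContDiff ℝ (⊤:ℕ∞) φ) (hf : ContDiff ℝ (⊤:ℕ∞) f)
    (i : Fin 3) (d : ℝ × (Fin 3 → ℝ)) (p : Pt) :
    eop φ d (Xop φ i f) p
      = eop φ d (eop φ ((0:ℝ), Pi.single i 1) f) p
        + (p.2.2 i / vzero p.2.2) * eop φ d (eop φ ((1:ℝ), (0 : Fin 3 → ℝ)) f) p
        + eop φ ((1:ℝ), (0 : Fin 3 → ℝ)) f p
            * eop φ d (fun q : Pt => q.2.2 i / vzero q.2.2) p := by
  set ei : ℝ × (Fin 3 → ℝ) := ((0:ℝ), Pi.single i 1) with hei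
  set e0 : ℝ × (Fin 3 → ℝ) := ((1:ℝ), (0 : Fin 3 → ℝ)) with he0
  have h1 := hasFDerivAt_eop hφ hf ei p
  have h0 := hasFDerivAt_eop hφ hf e0 p
  have hG := hasFDerivAt_g i p
  have hX : HasFDerivAt (Xop φ i f)
      (fderiv ℝ (eop φ ei f) p
        + ((p.2.2 i / vzero p.2.2) • fderiv ℝ (eop φ e0 f) p
           + eop φ e0 f p • fderiv ℝ (fun q : Pt => q.2.2 i / vzero q.2.2) p)) p := by
    rw [h1.fderiv, h0.fderiv, hG.fderiv]
    exact h1.add (hG.mul h0)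
  have hfd : ∀ u : Pt, fderiv ℝ (Xop φ i f) p u
      = fderiv ℝ (eop φ ei f) p u
        + (p.2.2 i / vzero p.2.2) * fderiv ℝ (eop φ e0 f) p u
        + eop φ e0 f p * fderiv ℝ (fun q : Pt => q.2.2 i / vzero q.2.2) p u := by
    intro u
    rw [hX.fderiv]
    simp only [ContinuousLinearMap.add_apply, ContinuousLinearMap.smul_apply, smul_eq_mul]
    ring
  have hrfl : eop φ d (Xop φ i f) p
      = fderiv ℝ (Xop φ i f) p (liftTX d)
        - Dphi φ d (p.1, p.2.1) * ∑ j, p.2.2 j * fderiv ℝ (Xop φ i f) p (vdir j) := rfl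
  have hsum : (∑ j, p.2.2 j * fderiv ℝ (Xop φ i f) p (vdir j))
      = (∑ j, p.2.2 j * fderiv ℝ (eop φ ei f) p (vdir j))
        + (p.2.2 i / vzero p.2.2) * (∑ j, p.2.2 j * fderiv ℝ (eop φ e0 f) p (vdir j))
        + eop φ e0 f p
            * (∑ j, p.2.2 j * fderiv ℝ (fun q : Pt => q.2.2 i / vzero q.2.2) p (vdir j)) := by
    have step : ∀ j : Fin 3, p.2.2 j * fderiv ℝ (Xop φ i f) p (vdir j)
        = p.2.2 j * fderiv ℝ (eop φ ei f) p (vdir j)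
          + (p.2.2 i / vzero p.2.2) * (p.2.2 j * fderiv ℝ (eop φ e0 f) p (vdir j))
          + eop φ e0 f p
              * (p.2.2 j * fderiv ℝ (fun q : Pt => q.2.2 i / vzero q.2.2) p (vdir j)) := by
      intro j; rw [hfd (vdir j)]; ring
    rw [Finset.sum_congr rfl fun j _ => step j, Finset.sum_add_distrib,
      Finset.sum_add_distrib, ← Finset.mul_sum, ← Finset.mul_sum]
  have r1 : eop φ d (eop φ ei f) p
      = fderiv ℝ (eop φ ei f) p (liftTX d)
        - Dphi φ d (p.1, p.2.1) * ∑ j, p.2.2 j * fderiv ℝ (eop φ ei f) p (vdir j) := rfl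
  have r0 : eop φ d (eop φ e0 f) p
      = fderiv ℝ (eop φ e0 f) p (liftTX d)
        - Dphi φ d (p.1, p.2.1) * ∑ j, p.2.2 j * fderiv ℝ (eop φ e0 f) p (vdir j) := rfl
  have rg : eop φ d (fun q : Pt => q.2.2 i / vzero q.2.2) p
      = fderiv ℝ (fun q : Pt => q.2.2 i / vzero q.2.2) p (liftTX d)
        - Dphi φ d (p.1, p.2.1)
            * ∑ j, p.2.2 j * fderiv ℝ (fun q : Pt => q.2.2 i / vzero q.2.2) p (vdir j) := rfl
  rw [hrfl, hfd (liftTX d), hsum, r1, r0, rg]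
  ring

end L37



open L37 in
/-- Lemma 3.7: `[𝐗_i, 𝐞_μ] f = (∂_{x^μ}φ)·(vⁱ/(v⁰)³)·𝐞_0 f`, which holds since
`𝐞_μ(vⁱ/v⁰) = −(∂_{x^μ}φ)·vⁱ/(v⁰)³`. -/
theorem commutator_X_generalizedTranslation
    (φ : ℝ × (Fin 3 → ℝ) → ℝ) (hφ : ContDiff ℝ (⊤ : ℕ∞) φ)
    (f : Pt → ℝ) (hf : ContDiff ℝ (⊤ : ℕ∞) f) (i : Fin 3) (μ : Fin 4) (p : Pt) :
    (Xop φ i (eop φ (dir4 μ) f) p - eop φ (dir4 μ) (Xop φ i f) p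
      = Dphi φ (dir4 μ) (p.1, p.2.1) * (p.2.2 i / (vzero p.2.2) ^ 3)
          * eop φ ((1 : ℝ), (0 : Fin 3 → ℝ)) f p) ∧
    (eop φ (dir4 μ) (fun q => q.2.2 i / vzero q.2.2) p
      = -(Dphi φ (dir4 μ) (p.1, p.2.1)) * (p.2.2 i / (vzero p.2.2) ^ 3)) := by
  set d : ℝ × (Fin 3 → ℝ) := dir4 μ with hd
  constructor
  · have hX : Xop φ i (eop φ d f) p
        = eop φ ((0:ℝ), Pi.single i 1) (eop φ d f) p
          + (p.2.2 i / vzero p.2.2) * eop φ ((1:ℝ), (0 : Fin 3 → ℝ)) (eop φ d f) p := rfl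
    rw [hX, eop_Xop hφ hf i d p,
      eop_comm hφ hf d ((0:ℝ), Pi.single i 1) p,
      eop_comm hφ hf d ((1:ℝ), (0 : Fin 3 → ℝ)) p,
      eop_g hφ d i p]
    ring
  · exact eop_g hφ d i p
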